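/- For 0 < s < 2, the double integral (1/4)∫_{-1}^{1}∫_{-1}^{1} (1-xy)^{-s/2} dx dy equals the generalized hypergeometric value ₃F₂(1/2, s/4+1/2, s/4; 3/2, 3/2; 1). -/

import Mathlib

open MeasureTheory
open scoped ENNReal NNReal

/-- The generalized hypergeometric function ₃F₂ as a series. -/
noncomputable def hyp3F2 (a₁ a₂ a₃ b₁ b₂ z : ℝ) : ℝ :=
  ∑' k : ℕ,
    ((ascPochhammer ℝ k).eval a₁ * (ascPochhammer ℝ k).eval a₂ * (ascPochhammer ℝ k).eval a₃) /
      ((ascPochhammer ℝ k).eval b₁ * (ascPochhammer ℝ k).eval b₂ * (k.factorial : ℝ)) * z ^ k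

noncomputable def bc (r : ℝ) (k : ℕ) : ℝ := (ascPochhammer ℝ k).eval r / (k.factorial : ℝ)

lemma poch_pos {x : ℝ} (hx : 0 < x) (n : ℕ) : 0 < (ascPochhammer ℝ n).eval x := by
  induction n with
  | zero => simp
  | succ n ih =>
    rw [ascPochhammer_succ_eval]
    exact mul_pos ih (by positivity)

lemma poch_double (x : ℝ) (m : ℕ) :
    (ascPochhammer ℝ (2*m)).eval (2*x)
      = 4^m * (ascPochhammer ℝ m).eval x * (ascPochhammer ℝ m).eval (x+1/2) := by
  induction m with
  | zero => simp
  | succ m ih =>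
    have h2 : 2 * (m+1) = (2*m) + 1 + 1 := by ring
    rw [h2, ascPochhammer_succ_eval, ascPochhammer_succ_eval, ih,
      ascPochhammer_succ_eval, ascPochhammer_succ_eval]
    push_cast
    ring

lemma fact_double (m : ℕ) :
    ((2*m).factorial : ℝ) = 4^m * (m.factorial : ℝ) * (ascPochhammer ℝ m).eval (1/2 : ℝ) := by
  induction m with
  | zero => simp
  | succ m ih =>
    have h2 : 2 * (m+1) = (2*m) + 1 + 1 := by ring
    rw [h2, Nat.factorial_succ, Nat.factorial_succ, ascPochhammer_succ_eval, Nat.factorial_succ]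
    push_cast
    rw [ih]
    push_cast
    ring

lemma poch_threehalves (m : ℕ) :
    (ascPochhammer ℝ m).eval (3/2 : ℝ) = (2*m+1) * (ascPochhammer ℝ m).eval (1/2 : ℝ) := by
  induction m with
  | zero => simp
  | succ m ih =>
    rw [ascPochhammer_succ_eval, ascPochhammer_succ_eval, ih]
    push_cast
    ring

lemma bc_succ (r : ℝ) (k : ℕ) : bc r (k+1) = bc r k * ((r + k)/(k+1)) := by
  have h : ((k+1).factorial : ℝ) = ((k:ℝ)+1) * (k.factorial : ℝ) := by
    rw [Nat.factorial_succ]; push_cast; ring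
  rw [bc, bc, ascPochhammer_succ_eval, h, div_mul_div_comm,
    mul_comm ((k.factorial : ℝ)) ((k:ℝ)+1)]

lemma bc_zero (r : ℝ) : bc r 0 = 1 := by simp [bc]

lemma bc_pos {r : ℝ} (hr : 0 < r) (k : ℕ) : 0 < bc r k := by
  unfold bc
  have := poch_pos hr k
  positivity

lemma bc_nonneg {r : ℝ} (hr : 0 < r) (k : ℕ) : 0 ≤ bc r k := (bc_pos hr k).le

lemma bc_le_one {r : ℝ} (hr0 : 0 < r) (hr : r ≤ 1) (k : ℕ) : bc r k ≤ 1 := by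
  induction k with
  | zero => simp [bc_zero]
  | succ k ih =>
    rw [bc_succ]
    have h1 : (r + k)/(k+1) ≤ 1 := by
      rw [div_le_one (by positivity)]
      linarith
    calc bc r k * ((r + k)/(k+1)) ≤ 1 * 1 :=
          mul_le_mul ih h1 (by positivity) zero_le_one
      _ = 1 := one_mul 1

lemma summable_bc_mul_pow {r t : ℝ} (hr0 : 0 < r) (hr1 : r ≤ 1) (ht : |t| < 1) :
    Summable (fun k => bc r k * t ^ k) := by
  apply Summable.of_norm
  refine Summable.of_nonneg_of_le (fun k => norm_nonneg _) (fun k => ?_)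
    (summable_geometric_of_lt_one (abs_nonneg t) ht)
  rw [norm_mul, norm_pow, Real.norm_eq_abs, Real.norm_eq_abs,
    abs_of_nonneg (bc_nonneg hr0 k)]
  calc bc r k * |t| ^ k ≤ 1 * |t| ^ k := by
        apply mul_le_mul_of_nonneg_right (bc_le_one hr0 hr1 k) (by positivity)
    _ = |t| ^ k := one_mul _

lemma summable_mul_pow_aux {t : ℝ} (ht : |t| < 1) (a b : ℝ) :
    Summable (fun k : ℕ => (a + b * k) * |t| ^ k) := by
  have h1 : Summable (fun k : ℕ => a * |t| ^ k) :=
    (summable_geometric_of_lt_one (abs_nonneg t) ht).mul_left a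
  have h2 : Summable (fun k : ℕ => b * ((k:ℝ) ^ 1 * |t| ^ k)) := by
    apply Summable.mul_left
    exact summable_pow_mul_geometric_of_norm_lt_one 1 (by rwa [Real.norm_eq_abs, abs_abs])
  have := h1.add h2
  refine this.congr fun k => ?_
  ring

lemma summable_bc_lin_mul_pow {r t : ℝ} (hr0 : 0 < r) (hr1 : r ≤ 1) (ht : |t| < 1) (a b : ℝ)
    (hab : ∀ k : ℕ, 0 ≤ a + b * k) :
    Summable (fun k => bc r k * (a + b * k) * t ^ k) := by
  apply Summable.of_norm
  refine Summable.of_nonneg_of_le (fun k => norm_nonneg _) (fun k => ?_)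
    (summable_mul_pow_aux ht a b)
  rw [Real.norm_eq_abs, abs_mul, abs_mul, abs_pow,
    abs_of_nonneg (bc_nonneg hr0 k), abs_of_nonneg (hab k)]
  have h1 : bc r k * (a + b * k) ≤ 1 * (a + b * k) :=
    mul_le_mul_of_nonneg_right (bc_le_one hr0 hr1 k) (hab k)
  have h2 : (0:ℝ) ≤ |t| ^ k := by positivity
  nlinarith [hab k]

lemma hasDerivAt_bcsum {r : ℝ} (hr0 : 0 < r) (hr1 : r ≤ 1) {u : ℝ} (hu : u ∈ Set.Ioo (-1:ℝ) 1) :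
    HasDerivAt (fun z => ∑' k, bc r k * z ^ k)
      (∑' k, bc r k * ((k:ℝ) * u ^ (k-1))) u := by
  have hu1 : |u| < 1 := abs_lt.mpr ⟨hu.1, hu.2⟩
  set ρ : ℝ := (|u| + 1)/2 with hρ
  have hρ0 : 0 < ρ := by positivity
  have hρ1 : ρ < 1 := by rw [hρ]; linarith
  have huρ : |u| < ρ := by rw [hρ]; linarith
  have hsum_u : Summable (fun k : ℕ => (k:ℝ) * ρ ^ (k-1)) := by
    rw [← summable_nat_add_iff 1]
    have h2 : Summable (fun k : ℕ => ((k:ℝ)^1 * ρ ^ k)) :=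
      summable_pow_mul_geometric_of_norm_lt_one 1
        (by rw [Real.norm_eq_abs, abs_of_nonneg hρ0.le]; exact hρ1)
    have h3 : Summable (fun k : ℕ => ρ ^ k) := summable_geometric_of_lt_one hρ0.le hρ1
    refine (h2.add h3).congr fun k => ?_
    simp only [Nat.add_sub_cancel]
    push_cast
    ring
  refine hasDerivAt_tsum_of_isPreconnected hsum_u Metric.isOpen_ball
    (convex_ball (0:ℝ) ρ).isPreconnected
    (g' := fun k y => bc r k * ((k:ℝ) * y ^ (k-1))) (y₀ := 0)
    (fun k y _ => (hasDerivAt_pow k y).const_mul (bc r k)) (fun k y hy => ?_)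
    (Metric.mem_ball_self hρ0) ?_ ?_
  · have hyρ : |y| < ρ := by
      rw [Metric.mem_ball, Real.dist_eq, sub_zero] at hy
      exact hy
    rw [Real.norm_eq_abs, abs_mul, abs_mul, abs_pow, abs_of_nonneg (bc_nonneg hr0 k),
      Nat.abs_cast]
    have h1 : |y| ^ (k-1) ≤ ρ ^ (k-1) := pow_le_pow_left₀ (abs_nonneg y) hyρ.le _
    have h2 := bc_le_one hr0 hr1 k
    have h3 := bc_nonneg hr0 k
    have : bc r k * ((k:ℝ) * |y| ^ (k-1)) ≤ 1 * ((k:ℝ) * ρ ^ (k-1)) := by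
      apply mul_le_mul h2 _ (by positivity) zero_le_one
      exact mul_le_mul_of_nonneg_left h1 (Nat.cast_nonneg k)
    linarith
  · apply summable_of_ne_finset_zero (s := {0})
    intro k hk
    have hk0 : k ≠ 0 := by simpa using hk
    simp [zero_pow hk0]
  · rw [Metric.mem_ball, Real.dist_eq, sub_zero]
    exact huρ

lemma bcsum_ode {r : ℝ} (hr0 : 0 < r) (hr1 : r ≤ 1) {u : ℝ} (hu : u ∈ Set.Ioo (-1:ℝ) 1) :
    (1 - u) * (∑' k, bc r k * ((k:ℝ) * u ^ (k-1))) = r * ∑' k, bc r k * u ^ k := by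
  have hu1 : |u| < 1 := abs_lt.mpr ⟨hu.1, hu.2⟩
  have hS0 : Summable (fun k => bc r k * u ^ k) := summable_bc_mul_pow hr0 hr1 hu1
  have hSr : Summable (fun k => bc r k * (r + k) * u ^ k) := by
    refine (summable_bc_lin_mul_pow hr0 hr1 hu1 r 1 (fun k => by positivity)).congr fun k => ?_
    ring
  have hSk : Summable (fun k => bc r k * (k:ℝ) * u ^ k) := by
    refine (summable_bc_lin_mul_pow hr0 hr1 hu1 0 1 (fun k => by positivity)).congr fun k => ?_
    ring
  have hterm : ∀ k : ℕ, bc r (k+1) * (((k+1:ℕ):ℝ) * u ^ ((k+1)-1)) = bc r k * (r + k) * u ^ k := by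
    intro k
    rw [bc_succ, Nat.add_sub_cancel]
    have hk1 : ((k:ℝ)+1) ≠ 0 := by positivity
    push_cast
    field_simp
  have hterm2 : ∀ k : ℕ, bc r (k+1) * (((k+1:ℕ)):ℝ) * u ^ (k+1)
      = bc r k * (r + k) * u ^ k * u := by
    intro k
    rw [bc_succ]
    have hk1 : ((k:ℝ)+1) ≠ 0 := by positivity
    push_cast
    field_simp
    ring
  have hSd : Summable (fun k => bc r k * ((k:ℝ) * u ^ (k-1))) := by
    rw [← summable_nat_add_iff 1]
    refine hSr.congr fun k => ?_
    exact (hterm k).symm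
  have A1 : (∑' k, bc r k * ((k:ℝ) * u ^ (k-1))) = ∑' k, bc r k * (r + k) * u ^ k := by
    rw [hSd.tsum_eq_zero_add]
    simp only [hterm]
    simp
  have A2 : (∑' k, bc r k * (k:ℝ) * u ^ k) = ∑' k, bc r k * (r + k) * u ^ k * u := by
    rw [hSk.tsum_eq_zero_add]
    simp only [hterm2]
    simp
  rw [A1, sub_mul, one_mul]
  have hmul : u * (∑' k, bc r k * (r + k) * u ^ k) = ∑' k, bc r k * (k:ℝ) * u ^ k := by
    rw [A2, tsum_mul_right, mul_comm]
  rw [hmul, ← hSr.tsum_sub hSk]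
  rw [← tsum_mul_left]
  apply tsum_congr
  intro k
  ring

lemma bcsum_mul_rpow_eq_one {r : ℝ} (hr0 : 0 < r) (hr1 : r ≤ 1) {t : ℝ}
    (ht : t ∈ Set.Ioo (-1:ℝ) 1) :
    (∑' k, bc r k * t ^ k) * (1 - t) ^ r = 1 := by
  have hg0 : ∀ u ∈ Set.Ioo (-1:ℝ) 1,
      HasDerivAt (fun z => (∑' k, bc r k * z ^ k) * (1 - z) ^ r) 0 u := by
    intro u hu
    have h1u : 0 < 1 - u := by linarith [hu.2]
    have hf := hasDerivAt_bcsum hr0 hr1 hu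
    have hlin : HasDerivAt (fun z : ℝ => 1 - z) (-1) u := by
      simpa using (hasDerivAt_id u).const_sub 1
    have hrp : HasDerivAt (fun z : ℝ => (1 - z) ^ r) ((-1) * r * (1 - u) ^ (r - 1)) u :=
      hlin.rpow_const (Or.inl h1u.ne')
    have hmul := hf.mul hrp
    refine hmul.congr_deriv ?_
    symm
    have hsplit : (1 - u) ^ (r:ℝ) = (1 - u) * (1 - u) ^ (r - 1) := by
      have h : (1:ℝ) + (r-1) = r := by ring
      nth_rewrite 1 [← h]
      rw [Real.rpow_add h1u, Real.rpow_one]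
    rw [hsplit]
    linear_combination (-(1 - u) ^ (r-1)) * (bcsum_ode hr0 hr1 hu)
  have hval0 : (∑' k, bc r k * (0:ℝ) ^ k) * (1 - 0) ^ (r:ℝ) = 1 := by
    have : (∑' k, bc r k * (0:ℝ) ^ k) = 1 := by
      rw [tsum_eq_single 0 (fun k hk => by simp [zero_pow hk])]
      simp [bc_zero]
    rw [this]
    simp [Real.one_rpow]
  rcases le_total 0 t with h0t | ht0
  · have hsub : Set.Icc (0:ℝ) t ⊆ Set.Ioo (-1:ℝ) 1 := by
      intro x hx
      exact ⟨by linarith [hx.1], by linarith [hx.2, ht.2]⟩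
    have := constant_of_has_deriv_right_zero
      (f := fun z => (∑' k, bc r k * z ^ k) * (1 - z) ^ r)
      (fun x hx => ((hg0 x (hsub hx)).continuousAt).continuousWithinAt)
      (fun x hx => (hg0 x (hsub (Set.Ico_subset_Icc_self hx))).hasDerivWithinAt)
      t (Set.right_mem_Icc.mpr h0t)
    rw [this]
    simpa using hval0
  · have hsub : Set.Icc t 0 ⊆ Set.Ioo (-1:ℝ) 1 := by
      intro x hx
      exact ⟨by linarith [hx.1, ht.1], by linarith [hx.2]⟩
    have := constant_of_has_deriv_right_zero
      (f := fun z => (∑' k, bc r k * z ^ k) * (1 - z) ^ r)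
      (fun x hx => ((hg0 x (hsub hx)).continuousAt).continuousWithinAt)
      (fun x hx => (hg0 x (hsub (Set.Ico_subset_Icc_self hx))).hasDerivWithinAt)
      0 (Set.right_mem_Icc.mpr ht0)
    rw [← this]
    simpa using hval0

theorem hasSum_binomial {r t : ℝ} (hr0 : 0 < r) (hr1 : r ≤ 1) (ht : |t| < 1) :
    HasSum (fun k => bc r k * t ^ k) ((1 - t) ^ (-r)) := by
  have ht' : t ∈ Set.Ioo (-1:ℝ) 1 := ⟨(abs_lt.mp ht).1, (abs_lt.mp ht).2⟩
  have h1t : (0:ℝ) < 1 - t := by linarith [(abs_lt.mp ht).2]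
  have hkey := bcsum_mul_rpow_eq_one hr0 hr1 ht'
  have hA : (0:ℝ) < (1 - t) ^ (r:ℝ) := Real.rpow_pos_of_pos h1t r
  have heq : (∑' k, bc r k * t ^ k) = (1 - t) ^ (-r) := by
    rw [Real.rpow_neg h1t.le]
    field_simp
    linarith [hkey]
  exact heq ▸ (summable_bc_mul_pow hr0 hr1 ht).hasSum

noncomputable def Ek (k : ℕ) : ℝ := (1 - (-1:ℝ)^(k+1))/((k:ℝ)+1)

lemma neg_one_pow_le_one (n : ℕ) : ((-1:ℝ))^n ≤ 1 := by
  rcases Nat.even_or_odd n with h | h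
  · rw [h.neg_one_pow]
  · rw [h.neg_one_pow]; norm_num

lemma Ek_nonneg (k : ℕ) : 0 ≤ Ek k := by
  unfold Ek
  apply div_nonneg _ (by positivity)
  linarith [neg_one_pow_le_one (k+1)]

lemma Ek_le (k : ℕ) : Ek k ≤ 2/((k:ℝ)+1) := by
  unfold Ek
  have h : (-1:ℝ) ≤ (-1:ℝ)^(k+1) := by
    rcases Nat.even_or_odd (k+1) with h | h
    · rw [h.neg_one_pow]; norm_num
    · rw [h.neg_one_pow]
  gcongr
  linarith

lemma Ek_odd {k : ℕ} (h : Odd k) : Ek k = 0 := by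
  have : Even (k+1) := by
    rcases h with ⟨m, rfl⟩
    exact ⟨m+1, by ring⟩
  simp [Ek, this.neg_one_pow]

lemma Ek_even (m : ℕ) : Ek (2*m) = 2/(2*(m:ℝ)+1) := by
  have : Odd (2*m+1) := ⟨m, by ring⟩
  rw [Ek, this.neg_one_pow]
  push_cast
  norm_num

lemma integral_Ioo_pow (k : ℕ) : ∫ y in Set.Ioo (-1:ℝ) 1, y ^ k = Ek k := by
  rw [← integral_Ioc_eq_integral_Ioo, ← intervalIntegral.integral_of_le (by norm_num : (-1:ℝ) ≤ 1),
    integral_pow]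
  simp [Ek]

lemma inner_integral {r : ℝ} (hr0 : 0 < r) (hr1 : r ≤ 1) {x : ℝ} (hx : x ∈ Set.Ioo (-1:ℝ) 1) :
    ∫ y in (-1:ℝ)..1, (1 - x*y) ^ (-r) = ∑' k, bc r k * x ^ k * Ek k := by
  have hx1 : |x| < 1 := abs_lt.mpr ⟨hx.1, hx.2⟩
  rw [intervalIntegral.integral_of_le (by norm_num : (-1:ℝ) ≤ 1), integral_Ioc_eq_integral_Ioo]
  have hcong : Set.EqOn (fun y : ℝ => (1 - x*y) ^ (-r))
      (fun y : ℝ => ∑' k, bc r k * x ^ k * y ^ k) (Set.Ioo (-1:ℝ) 1) := by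
    intro y hy
    have hy1 : |y| < 1 := abs_lt.mpr ⟨hy.1, hy.2⟩
    have hxy : |x*y| < 1 := by
      rw [abs_mul]
      nlinarith [abs_nonneg x, abs_nonneg y]
    have hts := (hasSum_binomial hr0 hr1 hxy).tsum_eq
    simp only
    rw [← hts]
    apply tsum_congr
    intro k
    rw [mul_pow]
    ring
  rw [setIntegral_congr_fun measurableSet_Ioo hcong]
  rw [integral_tsum ?meas ?fin]
  case meas =>
    intro k
    exact Continuous.aestronglyMeasurable (by continuity)
  case fin =>
    have hb : ∀ k : ℕ, ∫⁻ y in Set.Ioo (-1:ℝ) 1, ‖bc r k * x ^ k * y ^ k‖₊ ∂volume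
        ≤ ENNReal.ofReal (bc r k * |x| ^ k) * ENNReal.ofReal 2 := by
      intro k
      have hpt : ∀ y ∈ Set.Ioo (-1:ℝ) 1,
          (‖bc r k * x ^ k * y ^ k‖₊ : ℝ≥0∞) ≤ ENNReal.ofReal (bc r k * |x| ^ k) := by
        intro y hy
        rw [← enorm_eq_nnnorm, ← ofReal_norm]
        apply ENNReal.ofReal_le_ofReal
        rw [Real.norm_eq_abs, abs_mul, abs_mul, abs_pow, abs_pow,
          abs_of_nonneg (bc_nonneg hr0 k)]
        have hy1 : |y| ≤ 1 := (abs_lt.mpr ⟨hy.1, hy.2⟩).le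
        have h2 : |y| ^ k ≤ 1 := pow_le_one₀ (abs_nonneg y) hy1
        have h3 : 0 ≤ bc r k * |x| ^ k := mul_nonneg (bc_nonneg hr0 k) (by positivity)
        nlinarith
      calc ∫⁻ y in Set.Ioo (-1:ℝ) 1, ‖bc r k * x ^ k * y ^ k‖₊ ∂volume
          ≤ ∫⁻ y in Set.Ioo (-1:ℝ) 1, ENNReal.ofReal (bc r k * |x| ^ k) ∂volume :=
            setLIntegral_mono measurable_const hpt
        _ = ENNReal.ofReal (bc r k * |x| ^ k) * volume (Set.Ioo (-1:ℝ) 1) :=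
            setLIntegral_const _ _
        _ = ENNReal.ofReal (bc r k * |x| ^ k) * ENNReal.ofReal 2 := by
            rw [Real.volume_Ioo]; norm_num
    apply ne_top_of_le_ne_top ?_ (ENNReal.tsum_le_tsum hb)
    rw [ENNReal.tsum_mul_right]
    have hs : Summable (fun k => bc r k * |x| ^ k) :=
      summable_bc_mul_pow hr0 hr1 (by rwa [abs_abs])
    rw [← ENNReal.ofReal_tsum_of_nonneg
      (fun k => mul_nonneg (bc_nonneg hr0 k) (by positivity)) hs]
    exact ENNReal.mul_ne_top ENNReal.ofReal_ne_top ENNReal.ofReal_ne_top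
  apply tsum_congr
  intro k
  rw [MeasureTheory.integral_const_mul, integral_Ioo_pow]

lemma summable_q {r : ℝ} (hr0 : 0 < r) (hr1 : r ≤ 1) :
    Summable (fun k => bc r k * Ek k * Ek k) := by
  have hsq : Summable (fun k : ℕ => 4/((k:ℝ)+1)^2) := by
    have h1 : Summable (fun n : ℕ => 4 * (1/(n:ℝ)^2)) :=
      (Real.summable_one_div_nat_pow.mpr (by norm_num)).mul_left 4
    have h2 := (summable_nat_add_iff 1).mpr h1
    refine h2.congr fun k => ?_
    push_cast
    ring
  refine Summable.of_nonneg_of_le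
    (fun k => mul_nonneg (mul_nonneg (bc_nonneg hr0 k) (Ek_nonneg k)) (Ek_nonneg k))
    (fun k => ?_) hsq
  have ha := Ek_le k
  have hb := Ek_nonneg k
  have hc := bc_le_one hr0 hr1 k
  have hd := bc_nonneg hr0 k
  have he : (0:ℝ) ≤ 2/((k:ℝ)+1) := by positivity
  have hf : (2/((k:ℝ)+1)) * (2/((k:ℝ)+1)) = 4/((k:ℝ)+1)^2 := by
    field_simp
    ring
  have h1 : Ek k * Ek k ≤ (2/((k:ℝ)+1)) * (2/((k:ℝ)+1)) := mul_le_mul ha ha hb he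
  have h2 : bc r k * (Ek k * Ek k) ≤ 1 * (Ek k * Ek k) :=
    mul_le_mul_of_nonneg_right hc (mul_nonneg hb hb)
  calc bc r k * Ek k * Ek k = bc r k * (Ek k * Ek k) := by ring
    _ ≤ 1 * (Ek k * Ek k) := h2
    _ = Ek k * Ek k := one_mul _
    _ ≤ (2/((k:ℝ)+1)) * (2/((k:ℝ)+1)) := h1
    _ = 4/((k:ℝ)+1)^2 := hf

lemma outer_integral {r : ℝ} (hr0 : 0 < r) (hr1 : r ≤ 1) :
    ∫ x in (-1:ℝ)..1, (∫ y in (-1:ℝ)..1, (1 - x*y) ^ (-r))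
      = ∑' k, bc r k * Ek k * Ek k := by
  rw [intervalIntegral.integral_of_le (by norm_num : (-1:ℝ) ≤ 1), integral_Ioc_eq_integral_Ioo]
  have hcong : Set.EqOn (fun x : ℝ => ∫ y in (-1:ℝ)..1, (1 - x*y) ^ (-r))
      (fun x : ℝ => ∑' k, bc r k * Ek k * x ^ k) (Set.Ioo (-1:ℝ) 1) := by
    intro x hx
    simp only
    rw [inner_integral hr0 hr1 hx]
    exact tsum_congr fun k => by ring
  rw [setIntegral_congr_fun measurableSet_Ioo hcong]
  rw [integral_tsum ?meas ?fin]
  case meas =>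
    intro k
    exact Continuous.aestronglyMeasurable (by continuity)
  case fin =>
    have hterm : ∀ k : ℕ, ∫⁻ x in Set.Ioo (-1:ℝ) 1, ‖bc r k * Ek k * x ^ k‖₊ ∂volume
        ≤ ENNReal.ofReal (bc r k * Ek k * Ek k) := by
      intro k
      rcases Nat.even_or_odd k with hk | hk
      · have hint : IntegrableOn (fun x : ℝ => bc r k * Ek k * x ^ k) (Set.Ioo (-1:ℝ) 1) :=
          ((continuous_const.mul (continuous_pow k)).integrableOn_Icc).mono_set
            Set.Ioo_subset_Icc_self
        have hnorm : ∀ x : ℝ, ‖bc r k * Ek k * x ^ k‖ = bc r k * Ek k * x ^ k := by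
          intro x
          rw [Real.norm_eq_abs, abs_mul, abs_mul, abs_of_nonneg (bc_nonneg hr0 k),
            abs_of_nonneg (Ek_nonneg k), abs_pow, hk.pow_abs]
        simp only [← enorm_eq_nnnorm]
        rw [← ofReal_integral_norm_eq_lintegral_enorm hint]
        simp only [hnorm]
        rw [MeasureTheory.integral_const_mul, integral_Ioo_pow]
      · simp [Ek_odd hk]
    apply ne_top_of_le_ne_top ?_ (ENNReal.tsum_le_tsum hterm)
    rw [← ENNReal.ofReal_tsum_of_nonneg
      (fun k => mul_nonneg (mul_nonneg (bc_nonneg hr0 k) (Ek_nonneg k)) (Ek_nonneg k))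
      (summable_q hr0 hr1)]
    exact ENNReal.ofReal_ne_top
  apply tsum_congr
  intro k
  rw [MeasureTheory.integral_const_mul, integral_Ioo_pow]

theorem riesz_energy_eq_hyp3F2 (s : ℝ) (hs0 : 0 < s) (hs2 : s < 2) :
    (1/4) * ∫ x in (-1:ℝ)..1, ∫ y in (-1:ℝ)..1, (1 - x*y) ^ (-(s/2))
      = hyp3F2 (1/2) (s/4 + 1/2) (s/4) (3/2) (3/2) 1 := by
  have hr0 : 0 < s/2 := by linarith
  have hr1 : s/2 ≤ 1 := by linarith
  rw [outer_integral hr0 hr1, hyp3F2, ← tsum_mul_left]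
  have hinj : Function.Injective (fun m : ℕ => 2*m) := fun a b h => by simp only at h; omega
  have hsupp : Function.support
      (fun k : ℕ => (1/4 : ℝ) * (bc (s/2) k * Ek k * Ek k)) ⊆ Set.range (fun m : ℕ => 2*m) := by
    intro k hk
    rcases Nat.even_or_odd k with hke | hko
    · rcases hke with ⟨m, hm⟩
      exact ⟨m, by simp only; omega⟩
    · exfalso
      apply hk
      simp [Ek_odd hko]
  rw [← Function.Injective.tsum_eq hinj hsupp]
  apply tsum_congr
  intro m
  simp only [one_pow, mul_one]
  rw [Ek_even m, bc]
  have e1 : s/2 = 2*(s/4) := by ring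
  have e2 : (ascPochhammer ℝ (2*m)).eval (s/2)
      = 4^m * (ascPochhammer ℝ m).eval (s/4) * (ascPochhammer ℝ m).eval (s/4+1/2) := by
    rw [e1, poch_double]
  rw [e2, fact_double, poch_threehalves]
  have h1 : (0:ℝ) < (ascPochhammer ℝ m).eval (1/2 : ℝ) := poch_pos (by norm_num) m
  have h2 : (0:ℝ) < (m.factorial : ℝ) := by positivity
  have h3 : (0:ℝ) < 2*(m:ℝ)+1 := by positivity
  have h4 : (0:ℝ) < (4:ℝ)^m := by positivity
  field_simp
  ring
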